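/- Theorem 1 (Composition) instantiated for capability-set equivalence. Let Cap be a type with decidable equality, let M be any NFA over the alphabet Finset Cap (modelling a test strategy), and let Y : Finset Cap be nonempty. Let N be the NFA over Finset Cap with state type Option {y // y ∈ Y}, start states {none}, all states accepting, and transitions on a letter a: none to none when no element of Y belongs to a; none to some y when y ∉ a; some y to some y when y ∉ a. Then the synchronized product NFA of M and N (product states, product starts, product accepts, componentwise transitions on the same letter) accepts a word w : List (Finset Cap) if and only if M accepts w and ¬ (↑Y ⊆ ↑(CSet w)). In particular, the language of the product is exactly the set of histories derivable from M whose cumulative capability set does not contain Y. -/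

import Mathlib

/-- The cumulative capability set of a capability history. -/
def CSet {Cap : Type*} [DecidableEq Cap] (w : List (Finset Cap)) : Finset Cap :=
  w.foldl (· ∪ ·) ∅

/-- The exclusion NFA for capability-set equivalence. -/
def exclNFA {Cap : Type*} [DecidableEq Cap] (Y : Finset Cap) :
    NFA (Finset Cap) (Option {y // y ∈ Y}) where
  step := fun s a =>
    match s with
    | none => {q | (q = none ∧ ∀ y ∈ Y, y ∉ a) ∨ ∃ y : {y // y ∈ Y}, q = some y ∧ (y : Cap) ∉ a}
    | some y => {q | q = some y ∧ (y : Cap) ∉ a}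
  start := {none}
  accept := Set.univ

/-- The synchronized product of two NFAs over the same alphabet. -/
def NFA.prod {α : Type*} {σ₁ σ₂ : Type*} (M₁ : NFA α σ₁) (M₂ : NFA α σ₂) :
    NFA α (σ₁ × σ₂) where
  step := fun p a => {q | q.1 ∈ M₁.step p.1 a ∧ q.2 ∈ M₂.step p.2 a}
  start := {p | p.1 ∈ M₁.start ∧ p.2 ∈ M₂.start}
  accept := {p | p.1 ∈ M₁.accept ∧ p.2 ∈ M₂.accept}

private lemma evalFrom_cons {α σ : Type*} (M : NFA α σ) (S : Set σ) (a : α) (w : List α) :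
    M.evalFrom S (a :: w) = M.evalFrom (M.stepSet S a) w := rfl

private lemma evalFrom_empty {α σ : Type*} (M : NFA α σ) (w : List α) :
    M.evalFrom ∅ w = ∅ := by
  induction w with
  | nil => rfl
  | cons a w ih => rw [evalFrom_cons, NFA.stepSet_empty, ih]


private lemma stepSet_union {α σ : Type*} (M : NFA α σ) (S T : Set σ) (a : α) :
    M.stepSet (S ∪ T) a = M.stepSet S a ∪ M.stepSet T a := by
  ext r
  simp only [NFA.mem_stepSet, Set.mem_union]
  constructor
  · rintro ⟨p, (hp | hp), hr⟩
    · exact Or.inl ⟨p, hp, hr⟩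
    · exact Or.inr ⟨p, hp, hr⟩
  · rintro (⟨p, hp, hr⟩ | ⟨p, hp, hr⟩)
    · exact ⟨p, Or.inl hp, hr⟩
    · exact ⟨p, Or.inr hp, hr⟩

private lemma evalFrom_union {α σ : Type*} (M : NFA α σ) (v : List α) :
    ∀ (S T : Set σ), M.evalFrom (S ∪ T) v = M.evalFrom S v ∪ M.evalFrom T v := by
  induction v with
  | nil => intro S T; rfl
  | cons b v ihv =>
    intro S T
    rw [evalFrom_cons, stepSet_union, ihv, evalFrom_cons, evalFrom_cons]

private lemma stepSet_biUnion {α σ ι : Type*} (M : NFA α σ) (I : Set ι)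
    (f : ι → Set σ) (a : α) :
    M.stepSet (⋃ i ∈ I, f i) a = ⋃ i ∈ I, M.stepSet (f i) a := by
  ext r
  simp only [NFA.mem_stepSet, Set.mem_iUnion₂]
  constructor
  · rintro ⟨p, ⟨i, hi, hpi⟩, hr⟩
    exact ⟨i, hi, p, hpi, hr⟩
  · rintro ⟨i, hi, p, hpi, hr⟩
    exact ⟨p, ⟨i, hi, hpi⟩, hr⟩

private lemma evalFrom_biUnion {α σ ι : Type*} (M : NFA α σ) (I : Set ι) (v : List α) :
    ∀ (f : ι → Set σ), M.evalFrom (⋃ i ∈ I, f i) v = ⋃ i ∈ I, M.evalFrom (f i) v := by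
  induction v with
  | nil => intro f; rfl
  | cons b v ihv =>
    intro f
    simp only [evalFrom_cons, stepSet_biUnion, ihv]

private lemma prod_stepSet {α σ₁ σ₂ : Type*} (M₁ : NFA α σ₁) (M₂ : NFA α σ₂)
    (S₁ : Set σ₁) (S₂ : Set σ₂) (a : α) :
    (M₁.prod M₂).stepSet (S₁ ×ˢ S₂) a = (M₁.stepSet S₁ a) ×ˢ (M₂.stepSet S₂ a) := by
  ext q
  simp only [NFA.mem_stepSet, Set.mem_prod, NFA.prod]
  constructor
  · rintro ⟨p, ⟨h1, h2⟩, h3, h4⟩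
    exact ⟨⟨p.1, h1, h3⟩, ⟨p.2, h2, h4⟩⟩
  · rintro ⟨⟨p1, h1, h3⟩, ⟨p2, h2, h4⟩⟩
    exact ⟨(p1, p2), ⟨h1, h2⟩, h3, h4⟩

private lemma prod_evalFrom {α σ₁ σ₂ : Type*} (M₁ : NFA α σ₁) (M₂ : NFA α σ₂)
    (w : List α) : ∀ (S₁ : Set σ₁) (S₂ : Set σ₂),
    (M₁.prod M₂).evalFrom (S₁ ×ˢ S₂) w = (M₁.evalFrom S₁ w) ×ˢ (M₂.evalFrom S₂ w) := by
  induction w with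
  | nil => intro S₁ S₂; rfl
  | cons a w ih =>
    intro S₁ S₂
    rw [evalFrom_cons, prod_stepSet, ih, evalFrom_cons, evalFrom_cons]

private lemma prod_accepts {α σ₁ σ₂ : Type*} (M₁ : NFA α σ₁) (M₂ : NFA α σ₂)
    (w : List α) : w ∈ (M₁.prod M₂).accepts ↔ w ∈ M₁.accepts ∧ w ∈ M₂.accepts := by
  have hstart : (M₁.prod M₂).start = M₁.start ×ˢ M₂.start := rfl
  rw [NFA.mem_accepts, NFA.mem_accepts, NFA.mem_accepts, hstart,
    prod_evalFrom]
  constructor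
  · rintro ⟨q, hacc, hev⟩
    exact ⟨⟨q.1, hacc.1, hev.1⟩, ⟨q.2, hacc.2, hev.2⟩⟩
  · rintro ⟨⟨q1, a1, e1⟩, ⟨q2, a2, e2⟩⟩
    exact ⟨(q1, q2), ⟨a1, a2⟩, e1, e2⟩

private lemma mem_cset {Cap : Type*} [DecidableEq Cap] (w : List (Finset Cap)) (x : Cap) :
    x ∈ CSet w ↔ ∃ a ∈ w, x ∈ a := by
  have key : ∀ (w : List (Finset Cap)) (s : Finset Cap),
      x ∈ w.foldl (· ∪ ·) s ↔ x ∈ s ∨ ∃ a ∈ w, x ∈ a := by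
    intro w
    induction w with
    | nil => simp
    | cons a w ih =>
      intro s
      simp only [List.foldl_cons, ih, Finset.mem_union, List.mem_cons]
      constructor
      · rintro ((h | h) | ⟨b, hb, hx⟩)
        · exact Or.inl h
        · exact Or.inr ⟨a, Or.inl rfl, h⟩
        · exact Or.inr ⟨b, Or.inr hb, hx⟩
      · rintro (h | ⟨b, (rfl | hb), hx⟩)
        · exact Or.inl (Or.inl h)
        · exact Or.inl (Or.inr hx)
        · exact Or.inr ⟨b, hb, hx⟩
  simpa [CSet] using key w ∅

/-- evalFrom a `some` state: stay put, avoiding y. -/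
private lemma excl_eval_some {Cap : Type*} [DecidableEq Cap] (Y : Finset Cap)
    (y : {y // y ∈ Y}) (w : List (Finset Cap)) (q : Option {y // y ∈ Y}) :
    q ∈ (exclNFA Y).evalFrom {some y} w ↔ q = some y ∧ ∀ a ∈ w, (y : Cap) ∉ a := by
  induction w with
  | nil => simp
  | cons a w ih =>
    rw [evalFrom_cons]
    by_cases ha : (y : Cap) ∈ a
    · have hs : (exclNFA Y).stepSet {some y} a = ∅ := by
        ext q; simp [NFA.mem_stepSet, exclNFA, ha]
      rw [hs, evalFrom_empty]
      simp [ha]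
    · have hs : (exclNFA Y).stepSet {some y} a = {some y} := by
        ext q; simp [NFA.mem_stepSet, exclNFA, ha]
      rw [hs, ih]
      simp [ha]

private lemma excl_eval_none {Cap : Type*} [DecidableEq Cap] (Y : Finset Cap)
    (w : List (Finset Cap)) (q : Option {y // y ∈ Y}) :
    q ∈ (exclNFA Y).evalFrom {none} w ↔
      (q = none ∧ ∀ a ∈ w, ∀ y ∈ Y, y ∉ a) ∨
      (∃ y : {y // y ∈ Y}, q = some y ∧ w ≠ [] ∧ ∀ a ∈ w, (y : Cap) ∉ a) := by
  induction w generalizing q with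
  | nil => simp
  | cons a w ih =>
    rw [evalFrom_cons]
    have hss : (exclNFA Y).stepSet {none} a = (exclNFA Y).step none a := by
      ext q; simp [NFA.mem_stepSet]
    rw [hss]
    have hstep : (exclNFA Y).step none a =
        {q | (q = none ∧ ∀ y ∈ Y, y ∉ a) ∨
          ∃ y : {y // y ∈ Y}, q = some y ∧ (y : Cap) ∉ a} := rfl
    by_cases hY : ∀ y ∈ Y, y ∉ a
    · -- step set = {none} ∪ {some y | y ∉ a}
      have hset : (exclNFA Y).step none a =
          {none} ∪ (⋃ y ∈ {y : {y // y ∈ Y} | (y : Cap) ∉ a}, {some y}) := by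
        rw [hstep]; ext q
        simp only [Set.mem_setOf_eq, Set.mem_union, Set.mem_singleton_iff, Set.mem_iUnion]
        constructor
        · rintro (⟨rfl, _⟩ | ⟨z, rfl, hz⟩)
          · exact Or.inl rfl
          · exact Or.inr ⟨z, hz, rfl⟩
        · rintro (rfl | ⟨z, hz, rfl⟩)
          · exact Or.inl ⟨rfl, hY⟩
          · exact Or.inr ⟨z, rfl, hz⟩
      rw [hset]
      rw [evalFrom_union, evalFrom_biUnion]
      constructor
      · intro hq
        rcases Set.mem_union _ _ _ |>.1 hq with h | h
        · rcases (ih q).1 h with ⟨rfl, hrest⟩ | ⟨z, rfl, _, hz⟩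
          · left
            refine ⟨rfl, ?_⟩
            intro b hb
            rcases List.mem_cons.1 hb with rfl | hb
            · exact hY
            · exact hrest b hb
          · right
            refine ⟨z, rfl, by simp, ?_⟩
            intro b hb
            rcases List.mem_cons.1 hb with rfl | hb
            · exact hY z z.2
            · exact hz b hb
        · simp only [Set.mem_iUnion] at h
          obtain ⟨z, hz, hq⟩ := h
          obtain ⟨rfl, hzw⟩ := (excl_eval_some Y z w q).1 hq
          right
          refine ⟨z, rfl, by simp, ?_⟩
          intro b hb
          rcases List.mem_cons.1 hb with rfl | hb
          · exact hY z z.2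
          · exact hzw b hb
      · rintro (⟨rfl, hall⟩ | ⟨z, rfl, _, hz⟩)
        · apply Set.mem_union_left
          exact (ih none).2 (Or.inl ⟨rfl, fun b hb => hall b (List.mem_cons_of_mem a hb)⟩)
        · apply Set.mem_union_right
          have hza : (z : Cap) ∉ a := hz a List.mem_cons_self
          refine Set.mem_iUnion₂.2 ⟨z, hza, ?_⟩
          exact (excl_eval_some Y z w _).2 ⟨rfl, fun b hb => hz b (List.mem_cons_of_mem a hb)⟩
    · -- none not reachable after a; step set = {some y | y ∉ a}
      push_neg at hY
      have hset : (exclNFA Y).step none a =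
          ⋃ y ∈ {y : {y // y ∈ Y} | (y : Cap) ∉ a}, {some y} := by
        rw [hstep]; ext q
        simp only [Set.mem_setOf_eq, Set.mem_iUnion, Set.mem_singleton_iff]
        constructor
        · rintro (⟨rfl, h⟩ | ⟨z, rfl, hz⟩)
          · obtain ⟨y0, hy0, hy0a⟩ := hY
            exact absurd (h y0 hy0) (not_not_intro hy0a)
          · exact ⟨z, hz, rfl⟩
        · rintro ⟨z, hz, rfl⟩
          exact Or.inr ⟨z, rfl, hz⟩
      rw [hset, evalFrom_biUnion]
      obtain ⟨y0, hy0, hy0a⟩ := hY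
      constructor
      · intro hq
        simp only [Set.mem_iUnion] at hq
        obtain ⟨z, hz, hq⟩ := hq
        obtain ⟨rfl, hzw⟩ := (excl_eval_some Y z w q).1 hq
        right
        refine ⟨z, rfl, by simp, ?_⟩
        intro b hb
        rcases List.mem_cons.1 hb with rfl | hb
        · exact hz
        · exact hzw b hb
      · rintro (⟨rfl, hall⟩ | ⟨z, rfl, _, hz⟩)
        · exact absurd (hall a List.mem_cons_self y0 hy0) (not_not_intro hy0a)
        · have hza : (z : Cap) ∉ a := hz a List.mem_cons_self
          refine Set.mem_iUnion₂.2 ⟨z, hza, ?_⟩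
          exact (excl_eval_some Y z w _).2 ⟨rfl, fun b hb => hz b (List.mem_cons_of_mem a hb)⟩

private lemma excl_accepts {Cap : Type*} [DecidableEq Cap] (Y : Finset Cap) (hY : Y.Nonempty)
    (w : List (Finset Cap)) :
    w ∈ (exclNFA Y).accepts ↔ ¬ ((Y : Set Cap) ⊆ ((CSet w : Finset Cap) : Set Cap)) := by
  rw [NFA.mem_accepts]
  have hstart : (exclNFA Y).start = {none} := rfl
  have hacc : (exclNFA Y).accept = Set.univ := rfl
  rw [hstart, hacc]
  simp only [Set.mem_univ, true_and, exists_prop]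
  rw [Set.not_subset]
  constructor
  · rintro ⟨q, hq⟩
    rcases (excl_eval_none Y w q).1 hq with ⟨_, hall⟩ | ⟨z, _, _, hz⟩
    · obtain ⟨y0, hy0⟩ := hY
      refine ⟨y0, hy0, ?_⟩
      simp only [Finset.coe_mem, Finset.mem_coe, mem_cset]
      rintro ⟨a, ha, hya⟩
      exact hall a ha y0 hy0 hya
    · refine ⟨z, z.2, ?_⟩
      simp only [Finset.mem_coe, mem_cset]
      rintro ⟨a, ha, hya⟩
      exact hz a ha hya
  · rintro ⟨y, hyY, hy⟩
    simp only [Finset.mem_coe, mem_cset, not_exists] at hy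
    push_neg at hy
    rcases List.eq_nil_or_concat w with rfl | ⟨u, a, rfl⟩
    · exact ⟨none, (excl_eval_none Y [] none).2 (Or.inl ⟨rfl, by simp⟩)⟩
    · refine ⟨some ⟨y, hyY⟩, (excl_eval_none Y _ _).2 (Or.inr ⟨⟨y, hyY⟩, rfl, by simp, ?_⟩)⟩
      intro b hb
      exact hy b hb

theorem composition_capability_set {Cap : Type*} [DecidableEq Cap] {σ : Type*}
    (M : NFA (Finset Cap) σ) (Y : Finset Cap) (hY : Y.Nonempty)
    (w : List (Finset Cap)) :
    w ∈ (M.prod (exclNFA Y)).accepts ↔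
      w ∈ M.accepts ∧ ¬ ((Y : Set Cap) ⊆ ((CSet w : Finset Cap) : Set Cap)) := by
  rw [prod_accepts, excl_accepts Y hY]
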